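/- Let n ≥ 3 and 1 ≤ k ≤ n−1 be integers, and let G be a simple connected graph on n vertices with vertex connectivity κ(G) ≤ k. Then Π1(G) ≤ k^2 · (n−1)^{2k} · (n−2)^{2(n−k−1)}, with equality if and only if G is isomorphic to K_n^k. -/

import Mathlib

open SimpleGraph Finset

/-- Degree of a vertex (as `Nat.card` of its neighbor set). -/
noncomputable def mdeg {V : Type*} (G : SimpleGraph V) (v : V) : ℕ :=
  Nat.card (G.neighborSet v)

/-- First multiplicative Zagreb index. -/
noncomputable def mZ1 {V : Type*} [Fintype V] (G : SimpleGraph V) : ℕ :=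
  ∏ v : V, (mdeg G v) ^ 2

/-- Second multiplicative Zagreb index. -/
noncomputable def mZ2 {V : Type*} [Fintype V] (G : SimpleGraph V) : ℕ :=
  ∏ v : V, (mdeg G v) ^ (mdeg G v)

/-- `S` is a vertex cut of `G`: deleting `S` leaves a nonempty disconnected graph. -/
def IsVertexCut {V : Type*} (G : SimpleGraph V) (S : Finset V) : Prop :=
  ((↑S : Set V)ᶜ).Nonempty ∧ ¬ (G.induce ((↑S : Set V)ᶜ)).Connected

/-- The vertex connectivity of `G` is at most `k`: either `G` has a vertex cut of
size at most `k`, or `G` is complete with `n - 1 ≤ k` vertices. -/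
def VertexConnAtMost {V : Type*} [Fintype V] (G : SimpleGraph V) (k : ℕ) : Prop :=
  (∃ S : Finset V, S.card ≤ k ∧ IsVertexCut G S) ∨ (G = ⊤ ∧ Fintype.card V - 1 ≤ k)

/-- The graph `K_n^k`: vertex `0` is joined to the first `k` vertices of the complete
graph on the remaining `n - 1` vertices. -/
def KnK (n k : ℕ) : SimpleGraph (Fin n) :=
  SimpleGraph.fromRel (fun u v => (u.val ≠ 0 ∧ v.val ≠ 0) ∨ (u.val = 0 ∧ 1 ≤ v.val ∧ v.val ≤ k))

theorem N1 (y c : ℕ) : ∀ b : ℕ, y^b + b*c*y^(b-1) ≤ (y+c)^b := by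
  intro b
  induction b with
  | zero => simp
  | succ b ih =>
    have key : y^(b+1) + (b+1)*c*y^b ≤ (y+c)*(y^b + b*c*y^(b-1)) := by
      cases b with
      | zero => simp
      | succ b =>
        simp only [Nat.add_sub_cancel, pow_succ]
        nlinarith [Nat.zero_le ((b+1)*(c*c)*y^b), Nat.zero_le (y^b)]
    calc y^(b+1) + (b+1)*c*y^b ≤ (y+c)*(y^b + b*c*y^(b-1)) := key
      _ ≤ (y+c)*(y+c)^b := Nat.mul_le_mul_left _ ih
      _ = (y+c)^(b+1) := by ring

theorem N2aux (a d s : ℕ) :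
    (a+s+1) * (a+d+s+1)^(a+d+1) ≤ (s+1) * (2*a+d+s+1)^(a+d+1) := by
  set y := a+d+s+1 with hy
  have hin : a+d+s+1 ≤ (s+1)*(a+d+1) := by nlinarith [Nat.le_mul_of_pos_right s (show 0 < a+d+1 by omega)]
  have h1 : (a+s+1) * y ≤ (s+1) * (y + (a+d+1)*a) := by
    have := Nat.mul_le_mul_right a hin
    simp only [hy]; nlinarith
  have h2 : (a+s+1) * y^(a+d+1) ≤ (s+1) * (y^(a+d+1) + (a+d+1)*a*y^(a+d)) := by
    have := Nat.mul_le_mul_right (y^(a+d)) h1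
    calc (a+s+1) * y^(a+d+1) = (a+s+1) * y * y^(a+d) := by ring
      _ ≤ (s+1) * (y + (a+d+1)*a) * y^(a+d) := this
      _ = (s+1) * (y^(a+d+1) + (a+d+1)*a*y^(a+d)) := by ring
  have h3 : y^(a+d+1) + (a+d+1)*a*y^(a+d) ≤ (y+a)^(a+d+1) := by
    have := N1 y a (a+d+1)
    simpa using this
  have h4 : y + a = 2*a+d+s+1 := by omega
  calc (a+s+1) * y^(a+d+1) ≤ (s+1) * (y^(a+d+1) + (a+d+1)*a*y^(a+d)) := h2
    _ ≤ (s+1) * (y+a)^(a+d+1) := Nat.mul_le_mul_left _ h3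
    _ = (s+1) * (2*a+d+s+1)^(a+d+1) := by rw [h4]

theorem N2 (a d s : ℕ) :
    (a+s+1)^(a+1) * (a+d+s+1)^(a+d+1) ≤ (s+1) * (2*a+d+s+1)^(2*a+d+1) := by
  have key := N2aux a d s
  calc (a+s+1)^(a+1) * (a+d+s+1)^(a+d+1)
      = (a+s+1)^a * ((a+s+1) * (a+d+s+1)^(a+d+1)) := by ring
    _ ≤ (a+s+1)^a * ((s+1) * (2*a+d+s+1)^(a+d+1)) := Nat.mul_le_mul_left _ key
    _ ≤ (2*a+d+s+1)^a * ((s+1) * (2*a+d+s+1)^(a+d+1)) := by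
        apply Nat.mul_le_mul_right
        exact Nat.pow_le_pow_left (by omega) a
    _ = (s+1) * (2*a+d+s+1)^(2*a+d+1) := by
        rw [show 2*a+d+1 = a+(a+d+1) by omega, pow_add]; ring

theorem N2strict (a d s : ℕ) (ha : 1 ≤ a) :
    (a+s+1)^(a+1) * (a+d+s+1)^(a+d+1) < (s+1) * (2*a+d+s+1)^(2*a+d+1) := by
  have key := N2aux a d s
  have hlt : (a+s+1)^a < (2*a+d+s+1)^a :=
    Nat.pow_lt_pow_left (by omega) (by omega)
  have hpos : 0 < (s+1) * (2*a+d+s+1)^(a+d+1) := by positivity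
  calc (a+s+1)^(a+1) * (a+d+s+1)^(a+d+1)
      = (a+s+1)^a * ((a+s+1) * (a+d+s+1)^(a+d+1)) := by ring
    _ ≤ (a+s+1)^a * ((s+1) * (2*a+d+s+1)^(a+d+1)) := Nat.mul_le_mul_left _ key
    _ < (2*a+d+s+1)^a * ((s+1) * (2*a+d+s+1)^(a+d+1)) := by
        exact Nat.mul_lt_mul_of_lt_of_le hlt le_rfl hpos
    _ = (s+1) * (2*a+d+s+1)^(2*a+d+1) := by
        rw [show 2*a+d+1 = a+(a+d+1) by omega, pow_add]; ring

theorem N3aux (s m : ℕ) : ∀ j : ℕ, s*m^j ≤ (s+j)*(m+1)^j := by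
  intro j
  induction j with
  | zero => simp
  | succ j ih =>
    calc s*m^(j+1) = (s*m^j)*m := by ring
      _ ≤ ((s+j)*(m+1)^j)*m := Nat.mul_le_mul_right _ ih
      _ ≤ ((s+j)*(m+1)^j)*(m+1) := Nat.mul_le_mul_left _ (by omega)
      _ ≤ ((s+j+1)*(m+1)^j)*(m+1) := Nat.mul_le_mul_right _ (Nat.mul_le_mul_right _ (by omega))
      _ = (s+(j+1))*(m+1)^(j+1) := by ring

theorem N3auxstrict (s m j : ℕ) (hj : 1 ≤ j) (hm : 1 ≤ m) (hs : 1 ≤ s) :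
    s*m^j < (s+j)*(m+1)^j := by
  obtain ⟨j, rfl⟩ := Nat.exists_eq_add_of_le hj
  have ih := N3aux s m j
  calc s*m^(1+j) = (s*m^j)*m := by ring
    _ ≤ ((s+j)*(m+1)^j)*m := Nat.mul_le_mul_right _ ih
    _ < ((s+j)*(m+1)^j)*(m+1) := by
        apply Nat.mul_lt_mul_of_le_of_lt le_rfl (by omega)
        positivity
    _ ≤ ((s+(1+j))*(m+1)^j)*(m+1) := Nat.mul_le_mul_right _ (Nat.mul_le_mul_right _ (by omega))
    _ = (s+(1+j))*(m+1)^(1+j) := by ring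

theorem NKeyLe (n k s a b : ℕ) (hn : 3 ≤ n) (ha : 1 ≤ a) (hab : a ≤ b)
    (hsum : a + b + s = n) (hs : 1 ≤ s) (hsk : s ≤ k) (hk : k ≤ n - 1) :
    (a+s-1)^a * (n-1)^s * (b+s-1)^b ≤ k*(n-1)^k*(n-2)^(n-1-k) := by
  obtain ⟨a0, rfl⟩ : ∃ a0, a = a0+1 := ⟨a-1, by omega⟩
  obtain ⟨s0, rfl⟩ : ∃ s0, s = s0+1 := ⟨s-1, by omega⟩
  obtain ⟨d, rfl⟩ : ∃ d, b = a0+1+d := ⟨b-(a0+1), by omega⟩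
  obtain ⟨j, rfl⟩ : ∃ j, k = (s0+1)+j := ⟨k-(s0+1), by omega⟩
  have e1 : a0+1+(s0+1)-1 = a0+s0+1 := by omega
  have e2 : a0+1+d+(s0+1)-1 = a0+d+s0+1 := by omega
  have e3 : n-2 = 2*a0+d+s0+1 := by omega
  have e4 : n-1 = 2*a0+d+s0+2 := by omega
  have e5 : n-1-(s0+1+j) = (2*a0+d+1)-j := by omega
  have hjle : j ≤ 2*a0+d+1 := by omega
  rw [e5, e1, e2, e3, e4]
  have step1 : (a0+s0+1)^(a0+1) * (a0+d+s0+1)^(a0+1+d) ≤ (s0+1) * (2*a0+d+s0+1)^(2*a0+d+1) := by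
    have := N2 a0 d s0
    have er : a0+d+1 = a0+1+d := by omega
    rwa [er] at this
  have step2 : (s0+1) * (2*a0+d+s0+1)^j ≤ (s0+1+j) * (2*a0+d+s0+2)^j := by
    have := N3aux (s0+1) (2*a0+d+s0+1) j
    simpa using this
  calc (a0+s0+1)^(a0+1) * (2*a0+d+s0+2)^(s0+1) * (a0+d+s0+1)^(a0+1+d)
      = ((a0+s0+1)^(a0+1) * (a0+d+s0+1)^(a0+1+d)) * (2*a0+d+s0+2)^(s0+1) := by ring
    _ ≤ ((s0+1) * (2*a0+d+s0+1)^(2*a0+d+1)) * (2*a0+d+s0+2)^(s0+1) :=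
        Nat.mul_le_mul_right _ step1
    _ = ((s0+1) * (2*a0+d+s0+1)^j) * ((2*a0+d+s0+1)^((2*a0+d+1)-j) * (2*a0+d+s0+2)^(s0+1)) := by
        conv_lhs => rw [show 2*a0+d+1 = j + ((2*a0+d+1)-j) by omega, pow_add]
        ring
    _ ≤ ((s0+1+j) * (2*a0+d+s0+2)^j) * ((2*a0+d+s0+1)^((2*a0+d+1)-j) * (2*a0+d+s0+2)^(s0+1)) :=
        Nat.mul_le_mul_right _ step2
    _ = (s0+1+j)*(2*a0+d+s0+2)^(s0+1+j)*(2*a0+d+s0+1)^((2*a0+d+1)-j) := by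
        rw [show s0+1+j = (s0+1)+j by omega, pow_add]; ring

theorem NKeyLt (n k s a b : ℕ) (hn : 3 ≤ n) (ha : 1 ≤ a) (hab : a ≤ b)
    (hsum : a + b + s = n) (hs : 1 ≤ s) (hsk : s ≤ k) (hk : k ≤ n - 1)
    (hne : 2 ≤ a ∨ s < k) :
    (a+s-1)^a * (n-1)^s * (b+s-1)^b < k*(n-1)^k*(n-2)^(n-1-k) := by
  obtain ⟨a0, rfl⟩ : ∃ a0, a = a0+1 := ⟨a-1, by omega⟩
  obtain ⟨s0, rfl⟩ : ∃ s0, s = s0+1 := ⟨s-1, by omega⟩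
  obtain ⟨d, rfl⟩ : ∃ d, b = a0+1+d := ⟨b-(a0+1), by omega⟩
  obtain ⟨j, rfl⟩ : ∃ j, k = (s0+1)+j := ⟨k-(s0+1), by omega⟩
  have e1 : a0+1+(s0+1)-1 = a0+s0+1 := by omega
  have e2 : a0+1+d+(s0+1)-1 = a0+d+s0+1 := by omega
  have e3 : n-2 = 2*a0+d+s0+1 := by omega
  have e4 : n-1 = 2*a0+d+s0+2 := by omega
  have e5 : n-1-(s0+1+j) = (2*a0+d+1)-j := by omega
  have hjle : j ≤ 2*a0+d+1 := by omega
  rw [e5, e1, e2, e3, e4]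
  have step1 : (a0+s0+1)^(a0+1) * (a0+d+s0+1)^(a0+1+d) ≤ (s0+1) * (2*a0+d+s0+1)^(2*a0+d+1) := by
    have := N2 a0 d s0
    have er : a0+d+1 = a0+1+d := by omega
    rwa [er] at this
  have step2 : (s0+1) * (2*a0+d+s0+1)^j ≤ (s0+1+j) * (2*a0+d+s0+2)^j := by
    have := N3aux (s0+1) (2*a0+d+s0+1) j
    simpa using this
  have split : (s0+1) * (2*a0+d+s0+1)^(2*a0+d+1) * (2*a0+d+s0+2)^(s0+1)
      = ((s0+1) * (2*a0+d+s0+1)^j) * ((2*a0+d+s0+1)^((2*a0+d+1)-j) * (2*a0+d+s0+2)^(s0+1)) := by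
    conv_lhs => rw [show 2*a0+d+1 = j + ((2*a0+d+1)-j) by omega, pow_add]
    ring
  have fin : ((s0+1+j) * (2*a0+d+s0+2)^j) * ((2*a0+d+s0+1)^((2*a0+d+1)-j) * (2*a0+d+s0+2)^(s0+1))
      = (s0+1+j)*(2*a0+d+s0+2)^(s0+1+j)*(2*a0+d+s0+1)^((2*a0+d+1)-j) := by
    rw [show s0+1+j = (s0+1)+j by omega, pow_add]; ring
  rcases hne with h2a | hsj
  · -- strict in step1
    have step1' : (a0+s0+1)^(a0+1) * (a0+d+s0+1)^(a0+1+d) < (s0+1) * (2*a0+d+s0+1)^(2*a0+d+1) := by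
      have := N2strict a0 d s0 (by omega)
      have er : a0+d+1 = a0+1+d := by omega
      rwa [er] at this
    calc (a0+s0+1)^(a0+1) * (2*a0+d+s0+2)^(s0+1) * (a0+d+s0+1)^(a0+1+d)
        = ((a0+s0+1)^(a0+1) * (a0+d+s0+1)^(a0+1+d)) * (2*a0+d+s0+2)^(s0+1) := by ring
      _ < ((s0+1) * (2*a0+d+s0+1)^(2*a0+d+1)) * (2*a0+d+s0+2)^(s0+1) :=
          Nat.mul_lt_mul_of_lt_of_le step1' le_rfl (by positivity)
      _ = ((s0+1) * (2*a0+d+s0+1)^j) * ((2*a0+d+s0+1)^((2*a0+d+1)-j) * (2*a0+d+s0+2)^(s0+1)) := split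
      _ ≤ ((s0+1+j) * (2*a0+d+s0+2)^j) * ((2*a0+d+s0+1)^((2*a0+d+1)-j) * (2*a0+d+s0+2)^(s0+1)) :=
          Nat.mul_le_mul_right _ step2
      _ = (s0+1+j)*(2*a0+d+s0+2)^(s0+1+j)*(2*a0+d+s0+1)^((2*a0+d+1)-j) := fin
  · -- strict in step2
    have step2' : (s0+1) * (2*a0+d+s0+1)^j < (s0+1+j) * (2*a0+d+s0+2)^j := by
      have := N3auxstrict (s0+1) (2*a0+d+s0+1) j (by omega) (by omega) (by omega)
      simpa using this
    calc (a0+s0+1)^(a0+1) * (2*a0+d+s0+2)^(s0+1) * (a0+d+s0+1)^(a0+1+d)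
        = ((a0+s0+1)^(a0+1) * (a0+d+s0+1)^(a0+1+d)) * (2*a0+d+s0+2)^(s0+1) := by ring
      _ ≤ ((s0+1) * (2*a0+d+s0+1)^(2*a0+d+1)) * (2*a0+d+s0+2)^(s0+1) :=
          Nat.mul_le_mul_right _ step1
      _ = ((s0+1) * (2*a0+d+s0+1)^j) * ((2*a0+d+s0+1)^((2*a0+d+1)-j) * (2*a0+d+s0+2)^(s0+1)) := split
      _ < ((s0+1+j) * (2*a0+d+s0+2)^j) * ((2*a0+d+s0+1)^((2*a0+d+1)-j) * (2*a0+d+s0+2)^(s0+1)) :=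
          Nat.mul_lt_mul_of_lt_of_le step2' le_rfl (by positivity)
      _ = (s0+1+j)*(2*a0+d+s0+2)^(s0+1+j)*(2*a0+d+s0+1)^((2*a0+d+1)-j) := fin

lemma prod_forced {α : Type*} [DecidableEq α] (s : Finset α) (f g : α → ℕ)
    (hle : ∀ i ∈ s, f i ≤ g i) (hpos : ∀ i ∈ s, 0 < f i)
    (heq : ∏ i ∈ s, f i = ∏ i ∈ s, g i) : ∀ i ∈ s, f i = g i := by
  induction s using Finset.induction_on with
  | empty => intro i hi; simp at hi
  | insert _ _ hni ih =>
    rename_i a s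
    rw [Finset.prod_insert hni, Finset.prod_insert hni] at heq
    have h1 : f a ≤ g a := hle a (Finset.mem_insert_self a s)
    have h2 : ∏ i ∈ s, f i ≤ ∏ i ∈ s, g i :=
      Finset.prod_le_prod' (fun i hi => hle i (Finset.mem_insert_of_mem hi))
    have hp1 : 0 < f a := hpos a (Finset.mem_insert_self a s)
    have hp2 : 0 < ∏ i ∈ s, f i :=
      Finset.prod_pos (fun i hi => hpos i (Finset.mem_insert_of_mem hi))
    have hfa : f a = g a := by nlinarith
    have hprods : ∏ i ∈ s, f i = ∏ i ∈ s, g i := by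
      rw [hfa] at heq
      exact Nat.eq_of_mul_eq_mul_left (hfa ▸ hp1) heq
    intro i hi
    rcases Finset.mem_insert.mp hi with rfl | hi'
    · exact hfa
    · exact ih (fun j hj => hle j (Finset.mem_insert_of_mem hj))
        (fun j hj => hpos j (Finset.mem_insert_of_mem hj)) hprods i hi'

lemma deg_pos {V : Type*} [Fintype V] (G : SimpleGraph V) [DecidableRel G.Adj]
    (hG : G.Connected) (hcard : 1 < Fintype.card V) (v : V) : 0 < G.degree v := by
  rw [SimpleGraph.degree_pos_iff_exists_adj]
  obtain ⟨w, hw⟩ := Fintype.exists_ne_of_one_lt_card hcard v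
  obtain ⟨p⟩ := hG.preconnected v w
  cases p with
  | nil => exact absurd rfl hw
  | cons h _ => exact ⟨_, h⟩

lemma mdeg_eq_degree {V : Type*} [Fintype V] (G : SimpleGraph V) [DecidableRel G.Adj] (v : V) :
    mdeg G v = G.degree v := by
  rw [mdeg, ← SimpleGraph.card_neighborSet_eq_degree, Nat.card_eq_fintype_card]

lemma mZ1_eq_sq {V : Type*} [Fintype V] (G : SimpleGraph V) [DecidableRel G.Adj] :
    mZ1 G = (∏ v : V, G.degree v)^2 := by
  rw [mZ1, ← Finset.prod_pow]
  exact Finset.prod_congr rfl (fun v _ => by rw [mdeg_eq_degree])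

lemma mdeg_iso {V W : Type*} (G : SimpleGraph V) (H : SimpleGraph W) (e : G ≃g H) (v : V) :
    mdeg G v = mdeg H (e v) := by
  rw [mdeg, mdeg]
  exact Nat.card_congr (e.mapNeighborSet v)

lemma mZ1_iso {V W : Type*} [Fintype V] [Fintype W] (G : SimpleGraph V) (H : SimpleGraph W)
    (e : G ≃g H) : mZ1 G = mZ1 H := by
  rw [mZ1, mZ1]
  rw [← Equiv.prod_comp e.toEquiv (fun w => (mdeg H w)^2)]
  exact Finset.prod_congr rfl (fun v _ => by rw [mdeg_iso G H e]; rfl)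

lemma knk_adj (n k : ℕ) (u v : Fin n) :
    (KnK n k).Adj u v ↔ u.val ≠ v.val ∧ (u.val = 0 → v.val ≤ k) ∧ (v.val = 0 → u.val ≤ k) := by
  simp only [KnK, SimpleGraph.fromRel_adj, ne_eq, ← Fin.val_eq_val]
  omega

lemma card_filter_fin (n : ℕ) (q : Fin n → Prop) [DecidablePred q] (p : ℕ → Prop)
    [DecidablePred p] (h : ∀ v : Fin n, q v ↔ p v.val) :
    ((univ : Finset (Fin n)).filter q).card = ((Finset.range n).filter p).card := by
  have e : (univ : Finset (Fin n)).filter q = (univ : Finset (Fin n)).filter (fun v => p v.val) := by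
    ext v; simp [h v]
  rw [e, ← Nat.Iio_eq_range, ← Fin.map_valEmbedding_univ, Finset.filter_map, Finset.card_map]
  rfl

instance knkDec (n k : ℕ) : DecidableRel (KnK n k).Adj :=
  fun u v => decidable_of_iff' _ (knk_adj n k u v)

lemma knk_degree (n k : ℕ) (hn : 3 ≤ n) (hk1 : 1 ≤ k) (hk2 : k ≤ n - 1) (v : Fin n) :
    (KnK n k).degree v =
      if v.val = 0 then k else if v.val ≤ k then n-1 else n-2 := by
  classical
  rw [← SimpleGraph.card_neighborFinset_eq_degree]
  have hnf : (KnK n k).neighborFinset v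
      = (univ : Finset (Fin n)).filter (fun w =>
          (fun m => m ≠ v.val ∧ (v.val = 0 → m ≤ k) ∧ (m = 0 → v.val ≤ k)) w.val) := by
    ext w
    simp only [SimpleGraph.mem_neighborFinset, Finset.mem_filter, Finset.mem_univ, true_and]
    rw [SimpleGraph.adj_comm, knk_adj]
    tauto
  rw [hnf, card_filter_fin n _ (fun m => m ≠ v.val ∧ (v.val = 0 → m ≤ k) ∧ (m = 0 → v.val ≤ k))
    (fun w => Iff.rfl)]
  by_cases h0 : v.val = 0
  · have : (Finset.range n).filter (fun m => m ≠ v.val ∧ (v.val = 0 → m ≤ k) ∧ (m = 0 → v.val ≤ k))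
        = Finset.Icc 1 k := by
      ext m; simp only [Finset.mem_filter, Finset.mem_range, Finset.mem_Icc]; omega
    rw [this]; simp [h0, Nat.card_Icc]
  · by_cases hk : v.val ≤ k
    · have : (Finset.range n).filter (fun m => m ≠ v.val ∧ (v.val = 0 → m ≤ k) ∧ (m = 0 → v.val ≤ k))
          = (Finset.range n).erase v.val := by
        ext m; simp only [Finset.mem_filter, Finset.mem_range, Finset.mem_erase]; omega
      rw [this, Finset.card_erase_of_mem (by simp [v.isLt]), Finset.card_range]
      simp [h0, hk]
    · have : (Finset.range n).filter (fun m => m ≠ v.val ∧ (v.val = 0 → m ≤ k) ∧ (m = 0 → v.val ≤ k))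
          = ((Finset.range n).erase v.val).erase 0 := by
        ext m; simp only [Finset.mem_filter, Finset.mem_range, Finset.mem_erase]; omega
      rw [this, Finset.card_erase_of_mem
        (by simp only [Finset.mem_erase, Finset.mem_range]; omega),
        Finset.card_erase_of_mem (by simp [v.isLt]), Finset.card_range]
      simp only [h0, hk, if_false]
      omega

lemma knk_prod_degree (n k : ℕ) (hn : 3 ≤ n) (hk1 : 1 ≤ k) (hk2 : k ≤ n - 1) :
    (∏ v : Fin n, (KnK n k).degree v) = k * (n-1)^k * (n-2)^(n-1-k) := by
  classical
  have hsplit1 := Finset.prod_filter_mul_prod_filter_not (univ : Finset (Fin n))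
    (fun v => v.val = 0) (fun v => (KnK n k).degree v)
  have hsplit2 := Finset.prod_filter_mul_prod_filter_not
    ((univ : Finset (Fin n)).filter (fun v => ¬ v.val = 0))
    (fun v => v.val ≤ k) (fun v => (KnK n k).degree v)
  rw [← hsplit1, ← hsplit2]
  have c1 : ((univ : Finset (Fin n)).filter (fun v => v.val = 0)).card = 1 := by
    rw [card_filter_fin n _ (fun m => m = 0) (fun w => Iff.rfl)]
    have : (Finset.range n).filter (fun m => m = 0) = {0} := by
      ext m; simp only [Finset.mem_filter, Finset.mem_range, Finset.mem_singleton]; omega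
    rw [this]; rfl
  have c2 : (((univ : Finset (Fin n)).filter (fun v => ¬ v.val = 0)).filter
      (fun v => v.val ≤ k)).card = k := by
    rw [Finset.filter_filter, card_filter_fin n _ (fun m => ¬ m = 0 ∧ m ≤ k) (fun w => Iff.rfl)]
    have : (Finset.range n).filter (fun m => ¬ m = 0 ∧ m ≤ k) = Finset.Icc 1 k := by
      ext m; simp only [Finset.mem_filter, Finset.mem_range, Finset.mem_Icc]; omega
    rw [this, Nat.card_Icc]
    omega
  have c3 : (((univ : Finset (Fin n)).filter (fun v => ¬ v.val = 0)).filter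
      (fun v => ¬ v.val ≤ k)).card = n-1-k := by
    rw [Finset.filter_filter, card_filter_fin n _ (fun m => ¬ m = 0 ∧ ¬ m ≤ k) (fun w => Iff.rfl)]
    have : (Finset.range n).filter (fun m => ¬ m = 0 ∧ ¬ m ≤ k) = Finset.Ico (k+1) n := by
      ext m; simp only [Finset.mem_filter, Finset.mem_range, Finset.mem_Ico]; omega
    rw [this, Nat.card_Ico]
    omega
  have p1 : ∏ v ∈ (univ : Finset (Fin n)).filter (fun v => v.val = 0),
      (KnK n k).degree v = k := by
    rw [Finset.prod_congr rfl (fun v hv => ?_), Finset.prod_const, c1, pow_one]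
    rw [knk_degree n k hn hk1 hk2]
    simp only [Finset.mem_filter] at hv
    simp [hv.2]
  have p2 : ∏ v ∈ ((univ : Finset (Fin n)).filter (fun v => ¬ v.val = 0)).filter
      (fun v => v.val ≤ k), (KnK n k).degree v = (n-1)^k := by
    rw [Finset.prod_congr rfl (fun v hv => ?_), Finset.prod_const, c2]
    rw [knk_degree n k hn hk1 hk2]
    simp only [Finset.mem_filter] at hv
    simp [hv.1.2, hv.2]
  have p3 : ∏ v ∈ ((univ : Finset (Fin n)).filter (fun v => ¬ v.val = 0)).filter
      (fun v => ¬ v.val ≤ k), (KnK n k).degree v = (n-2)^(n-1-k) := by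
    rw [Finset.prod_congr rfl (fun v hv => ?_), Finset.prod_const, c3]
    rw [knk_degree n k hn hk1 hk2]
    simp only [Finset.mem_filter] at hv
    simp [hv.1.2, hv.2]
  rw [p1, p2, p3]
  ring

lemma structure_of_caps (n : ℕ) (G : SimpleGraph (Fin n)) [DecidableRel G.Adj]
    (S P Q : Finset (Fin n))
    (hPS : Disjoint P S) (hQS : Disjoint Q S) (hPQ : Disjoint P Q)
    (hunion : P ∪ Q ∪ S = univ)
    (hP1 : P.card = 1)
    (hcapP : ∀ x ∈ P, G.neighborFinset x ⊆ (P ∪ S).erase x)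
    (hcapQ : ∀ x ∈ Q, G.neighborFinset x ⊆ (Q ∪ S).erase x)
    (hdegP : ∀ x ∈ P, G.degree x = P.card + S.card - 1)
    (hdegQ : ∀ x ∈ Q, G.degree x = Q.card + S.card - 1)
    (hdegS : ∀ z ∈ S, G.degree z = n - 1) :
    ∃ v0, v0 ∉ S ∧ G.neighborFinset v0 = S ∧
      (∀ z ∈ S, G.neighborFinset z = univ.erase z) ∧
      (∀ y, y ∉ S → y ≠ v0 → G.neighborFinset y = (univ.erase v0).erase y) := by
  classical
  obtain ⟨v0, hPv0⟩ := Finset.card_eq_one.mp hP1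
  have hv0P : v0 ∈ P := by rw [hPv0]; exact Finset.mem_singleton_self v0
  have hv0S : v0 ∉ S := fun h => (Finset.disjoint_left.mp hPS) hv0P h
  have hv0Q : v0 ∉ Q := fun h => (Finset.disjoint_left.mp hPQ) hv0P h
  have hcards : P.card + Q.card + S.card = n := by
    have hd : Disjoint (P ∪ Q) S := Finset.disjoint_union_left.mpr ⟨hPS, hQS⟩
    calc P.card + Q.card + S.card = (P ∪ Q).card + S.card := by
          rw [Finset.card_union_of_disjoint hPQ]
      _ = (P ∪ Q ∪ S).card := (Finset.card_union_of_disjoint hd).symm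
      _ = n := by rw [hunion, Finset.card_univ, Fintype.card_fin]
  -- neighbors of v0
  have hnb0 : G.neighborFinset v0 = S := by
    apply Finset.eq_of_subset_of_card_le
    · have h := hcapP v0 hv0P
      have e : (P ∪ S).erase v0 = S := by
        rw [hPv0]
        ext x
        simp only [Finset.mem_erase, Finset.mem_union, Finset.mem_singleton]
        constructor
        · rintro ⟨h1, h2 | h3⟩
          · exact absurd h2 h1
          · exact h3
        · intro hx
          exact ⟨fun h' => hv0S (h' ▸ hx), Or.inr hx⟩
      rwa [e] at h
    · rw [SimpleGraph.card_neighborFinset_eq_degree, hdegP v0 hv0P, hP1]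
      omega
  refine ⟨v0, hv0S, hnb0, ?_, ?_⟩
  · intro z hz
    apply Finset.eq_of_subset_of_card_le
    · intro y hy
      simp only [SimpleGraph.mem_neighborFinset] at hy
      simp only [Finset.mem_erase, Finset.mem_univ, and_true]
      exact (G.ne_of_adj hy.symm)
    · rw [SimpleGraph.card_neighborFinset_eq_degree, hdegS z hz,
        Finset.card_erase_of_mem (Finset.mem_univ z), Finset.card_univ, Fintype.card_fin]
  · intro y hyS hyv0
    have hyQ : y ∈ Q := by
      have : y ∈ P ∪ Q ∪ S := hunion ▸ Finset.mem_univ y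
      simp only [Finset.mem_union] at this
      rcases this with (hP' | hQ') | hS'
      · exfalso
        rw [hPv0, Finset.mem_singleton] at hP'
        exact hyv0 hP'
      · exact hQ'
      · exact absurd hS' hyS
    have hQS' : Q ∪ S = (univ.erase v0) := by
      apply Finset.eq_of_subset_of_card_le
      · intro x hx
        simp only [Finset.mem_erase, Finset.mem_univ, and_true]
        rintro rfl
        simp only [Finset.mem_union] at hx
        exact hx.elim hv0Q hv0S
      · rw [Finset.card_erase_of_mem (Finset.mem_univ v0), Finset.card_univ, Fintype.card_fin,
          Finset.card_union_of_disjoint hQS]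
        omega
    apply Finset.eq_of_subset_of_card_le
    · exact hQS' ▸ hcapQ y hyQ
    · rw [SimpleGraph.card_neighborFinset_eq_degree, hdegQ y hyQ,
        Finset.card_erase_of_mem, Finset.card_erase_of_mem (Finset.mem_univ v0),
        Finset.card_univ, Fintype.card_fin]
      · omega
      · simp only [Finset.mem_erase, Finset.mem_univ, and_true]; exact hyv0

lemma cut_bound (n k : ℕ) (hn : 3 ≤ n) (hk1 : 1 ≤ k) (hk2 : k ≤ n-1)
    (G : SimpleGraph (Fin n)) [DecidableRel G.Adj] (hG : G.Connected)
    (S : Finset (Fin n)) (hS : S.card ≤ k) (hcut : IsVertexCut G S) :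
    (∏ v : Fin n, G.degree v) ≤ k*(n-1)^k*(n-2)^(n-1-k) ∧
    ((∏ v : Fin n, G.degree v) = k*(n-1)^k*(n-2)^(n-1-k) →
       S.card = k ∧ ∃ v0, v0 ∉ S ∧ G.neighborFinset v0 = S ∧
         (∀ z ∈ S, G.neighborFinset z = univ.erase z) ∧
         (∀ y, y ∉ S → y ≠ v0 → G.neighborFinset y = (univ.erase v0).erase y)) := by
  classical
  obtain ⟨hne, hdisc⟩ := hcut
  have hs1 : 1 ≤ S.card := by
    by_contra h
    have hS0 : S = ∅ := Finset.card_eq_zero.mp (by omega)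
    rw [hS0] at hdisc
    rw [show ((↑(∅ : Finset (Fin n)) : Set (Fin n))ᶜ) = Set.univ by simp] at hdisc
    exact hdisc ((SimpleGraph.induceUnivIso G).connected_iff.mpr hG)
  haveI : Nonempty ((↑S : Set (Fin n))ᶜ : Set (Fin n)) := hne.to_subtype
  have hpre : ¬ (G.induce ((↑S : Set (Fin n))ᶜ)).Preconnected := fun hp => hdisc ⟨hp⟩
  rw [SimpleGraph.Preconnected] at hpre
  push_neg at hpre
  obtain ⟨u, w, huw⟩ := hpre
  set H := G.induce ((↑S : Set (Fin n))ᶜ) with hH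
  set A : Finset (Fin n) :=
    univ.filter (fun x => ∃ y : ((↑S : Set (Fin n))ᶜ : Set (Fin n)),
      H.Reachable u y ∧ (y : Fin n) = x) with hA
  have huA : (u : Fin n) ∈ A := by
    rw [hA, Finset.mem_filter]
    exact ⟨Finset.mem_univ _, u, SimpleGraph.Reachable.refl _, rfl⟩
  have hAS : ∀ x ∈ A, x ∉ S := by
    intro x hx
    rw [hA, Finset.mem_filter] at hx
    obtain ⟨-, y, hy, rfl⟩ := hx
    exact fun h => y.2 (Finset.mem_coe.mpr h)
  have hwS : (w : Fin n) ∉ S := fun h => w.2 (Finset.mem_coe.mpr h)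
  have hwA : (w : Fin n) ∉ A := by
    intro hw
    rw [hA, Finset.mem_filter] at hw
    obtain ⟨-, y, hy, hval⟩ := hw
    have : y = w := Subtype.ext hval
    exact huw (this ▸ hy)
  have hnoedge : ∀ x ∈ A, ∀ y : Fin n, y ∉ S → y ∉ A → ¬ G.Adj x y := by
    intro x hx y hyS hyA hadj
    rw [hA, Finset.mem_filter] at hx
    obtain ⟨-, x', hx', rfl⟩ := hx
    have hySc : y ∈ ((↑S : Set (Fin n))ᶜ) := by simpa using hyS
    have hadj' : H.Adj x' ⟨y, hySc⟩ := by rw [hH]; simpa using hadj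
    apply hyA
    rw [hA, Finset.mem_filter]
    exact ⟨Finset.mem_univ _, ⟨y, hySc⟩, hx'.trans hadj'.reachable, rfl⟩
  set B : Finset (Fin n) := (univ \ S) \ A with hB
  have hwB : (w : Fin n) ∈ B := by
    rw [hB]; simp only [Finset.mem_sdiff, Finset.mem_univ, true_and]
    exact ⟨hwS, hwA⟩
  have hBS : ∀ x ∈ B, x ∉ S := by
    intro x hx; rw [hB] at hx; simp only [Finset.mem_sdiff, Finset.mem_univ, true_and] at hx
    exact hx.1
  have hBA : ∀ x ∈ B, x ∉ A := by
    intro x hx; rw [hB] at hx; simp only [Finset.mem_sdiff, Finset.mem_univ, true_and] at hx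
    exact hx.2
  have hdisjAS : Disjoint A S := Finset.disjoint_left.mpr (fun {x} hx => hAS x hx)
  have hdisjBS : Disjoint B S := Finset.disjoint_left.mpr (fun {x} hx => hBS x hx)
  have hdisjAB : Disjoint A B := Finset.disjoint_right.mpr (fun {x} hx => hBA x hx)
  have hunion : A ∪ B ∪ S = univ := by
    ext x
    simp only [Finset.mem_union, Finset.mem_univ, iff_true]
    by_cases hxS : x ∈ S
    · exact Or.inr hxS
    · by_cases hxA : x ∈ A
      · exact Or.inl (Or.inl hxA)
      · refine Or.inl (Or.inr ?_)
        rw [hB]; simp only [Finset.mem_sdiff, Finset.mem_univ, true_and]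
        exact ⟨hxS, hxA⟩
  have hcards : A.card + B.card + S.card = n := by
    have hd : Disjoint (A ∪ B) S := Finset.disjoint_union_left.mpr ⟨hdisjAS, hdisjBS⟩
    calc A.card + B.card + S.card = (A ∪ B).card + S.card := by
          rw [Finset.card_union_of_disjoint hdisjAB]
      _ = (A ∪ B ∪ S).card := (Finset.card_union_of_disjoint hd).symm
      _ = n := by rw [hunion, Finset.card_univ, Fintype.card_fin]
  have hA1 : 1 ≤ A.card := Finset.card_pos.mpr ⟨_, huA⟩
  have hB1 : 1 ≤ B.card := Finset.card_pos.mpr ⟨_, hwB⟩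
  -- caps
  have hcapA : ∀ x ∈ A, G.neighborFinset x ⊆ (A ∪ S).erase x := by
    intro x hx y hy
    rw [SimpleGraph.mem_neighborFinset] at hy
    rw [Finset.mem_erase, Finset.mem_union]
    refine ⟨fun h => G.loopless.irrefl x (h ▸ hy), ?_⟩
    by_contra hcon
    push_neg at hcon
    exact hnoedge x hx y hcon.2 hcon.1 hy
  have hcapB : ∀ x ∈ B, G.neighborFinset x ⊆ (B ∪ S).erase x := by
    intro x hx y hy
    rw [SimpleGraph.mem_neighborFinset] at hy
    rw [Finset.mem_erase, Finset.mem_union]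
    refine ⟨fun h => G.loopless.irrefl x (h ▸ hy), ?_⟩
    by_contra hcon
    push_neg at hcon
    have hyA : y ∈ A := by
      have : y ∈ A ∪ B ∪ S := hunion ▸ Finset.mem_univ y
      simp only [Finset.mem_union] at this
      tauto
    exact hnoedge y hyA x (hBS x hx) (hBA x hx) hy.symm
  have hcapS : ∀ z : Fin n, G.neighborFinset z ⊆ univ.erase z := by
    intro z y hy
    rw [SimpleGraph.mem_neighborFinset] at hy
    rw [Finset.mem_erase]
    exact ⟨fun h => G.loopless.irrefl z (h ▸ hy), Finset.mem_univ _⟩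
  -- cap cards
  have cardAS : ∀ x ∈ A, ((A ∪ S).erase x).card = A.card + S.card - 1 := by
    intro x hx
    rw [Finset.card_erase_of_mem (Finset.mem_union_left _ hx),
      Finset.card_union_of_disjoint hdisjAS]
  have cardBS : ∀ x ∈ B, ((B ∪ S).erase x).card = B.card + S.card - 1 := by
    intro x hx
    rw [Finset.card_erase_of_mem (Finset.mem_union_left _ hx),
      Finset.card_union_of_disjoint hdisjBS]
  have cardU : ∀ z : Fin n, (univ.erase z).card = n - 1 := by
    intro z
    rw [Finset.card_erase_of_mem (Finset.mem_univ _), Finset.card_univ, Fintype.card_fin]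
  -- cap function
  set cap : Fin n → ℕ := fun x =>
    if x ∈ A then A.card + S.card - 1 else if x ∈ B then B.card + S.card - 1 else n - 1
    with hcap
  have hdegcap : ∀ x : Fin n, G.degree x ≤ cap x := by
    intro x
    rw [hcap]
    by_cases hxA : x ∈ A
    · simp only [hxA, if_true]
      rw [← SimpleGraph.card_neighborFinset_eq_degree, ← cardAS x hxA]
      exact Finset.card_le_card (hcapA x hxA)
    · by_cases hxB : x ∈ B
      · simp only [hxA, hxB, if_false, if_true]
        rw [← SimpleGraph.card_neighborFinset_eq_degree, ← cardBS x hxB]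
        exact Finset.card_le_card (hcapB x hxB)
      · simp only [hxA, hxB, if_false]
        rw [← SimpleGraph.card_neighborFinset_eq_degree, ← cardU x]
        exact Finset.card_le_card (hcapS x)
  -- product of caps
  have hprodcap : (∏ x : Fin n, cap x)
      = (A.card + S.card - 1)^A.card * (n-1)^S.card * (B.card + S.card - 1)^B.card := by
    rw [← hunion]
    rw [Finset.prod_union (Finset.disjoint_union_left.mpr ⟨hdisjAS, hdisjBS⟩),
      Finset.prod_union hdisjAB]
    have pA : ∏ x ∈ A, cap x = (A.card + S.card - 1)^A.card := by
      rw [Finset.prod_congr rfl (fun x hx => ?_), Finset.prod_const]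
      rw [hcap]; simp only [hx, if_true]
    have pB : ∏ x ∈ B, cap x = (B.card + S.card - 1)^B.card := by
      rw [Finset.prod_congr rfl (fun x hx => ?_), Finset.prod_const]
      rw [hcap]; simp only [hBA x hx, hx, if_false, if_true]
    have pS : ∏ x ∈ S, cap x = (n-1)^S.card := by
      rw [Finset.prod_congr rfl (fun x hx => ?_), Finset.prod_const]
      rw [hcap]
      have := Finset.disjoint_right.mp hdisjAS hx
      have := Finset.disjoint_right.mp hdisjBS hx
      simp only [‹x ∉ A›, ‹x ∉ B›, if_false]
    rw [pA, pB, pS]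
    ring
  have hDlecap : (∏ v : Fin n, G.degree v) ≤ ∏ x : Fin n, cap x :=
    Finset.prod_le_prod' (fun i _ => hdegcap i)
  have hcapP : (∏ x : Fin n, cap x) ≤ k*(n-1)^k*(n-2)^(n-1-k) := by
    rw [hprodcap]
    rcases le_total A.card B.card with hab | hba
    · exact NKeyLe n k S.card A.card B.card hn hA1 hab hcards hs1 hS hk2
    · have := NKeyLe n k S.card B.card A.card hn hB1 hba (by omega) hs1 hS hk2
      calc (A.card + S.card - 1)^A.card * (n-1)^S.card * (B.card + S.card - 1)^B.card
          = (B.card + S.card - 1)^B.card * (n-1)^S.card * (A.card + S.card - 1)^A.card := by ring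
        _ ≤ k*(n-1)^k*(n-2)^(n-1-k) := this
  refine ⟨hDlecap.trans hcapP, ?_⟩
  intro heq
  -- equality analysis
  have hdpos : ∀ v : Fin n, 0 < G.degree v :=
    deg_pos G hG (by rw [Fintype.card_fin]; omega)
  have hcapeq : (∏ x : Fin n, cap x) = k*(n-1)^k*(n-2)^(n-1-k) :=
    le_antisymm hcapP (heq ▸ hDlecap)
  have hdegeq : ∀ x : Fin n, G.degree x = cap x := by
    have := prod_forced univ (fun v => G.degree v) cap
      (fun i _ => hdegcap i) (fun i _ => hdpos i) (by rw [heq, hcapeq])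
    intro x; exact this x (Finset.mem_univ x)
  -- min side is singleton and S.card = k
  have hstrict : ¬ (2 ≤ min A.card B.card ∨ S.card < k) := by
    intro hcon
    rcases le_total A.card B.card with hab | hba
    · have := NKeyLt n k S.card A.card B.card hn hA1 hab hcards hs1 hS hk2
        (by rcases hcon with h | h; exacts [Or.inl (by omega), Or.inr h])
      rw [← hprodcap] at this
      omega
    · have := NKeyLt n k S.card B.card A.card hn hB1 hba (by omega) hs1 hS hk2
        (by rcases hcon with h | h; exacts [Or.inl (by omega), Or.inr h])
      have e : (B.card + S.card - 1)^B.card * (n-1)^S.card * (A.card + S.card - 1)^A.card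
          = ∏ x : Fin n, cap x := by rw [hprodcap]; ring
      rw [e] at this
      omega
  push_neg at hstrict
  obtain ⟨hmin, hsk⟩ := hstrict
  have hsk' : S.card = k := by omega
  have hone : A.card = 1 ∨ B.card = 1 := by
    rcases le_total A.card B.card with h | h
    · left; omega
    · right; omega
  -- apply structure lemma with singleton side
  refine ⟨hsk', ?_⟩
  rcases hone with h1 | h1
  · exact structure_of_caps n G S A B hdisjAS hdisjBS hdisjAB hunion h1
      hcapA hcapB
      (fun x hx => by rw [hdegeq x, hcap]; simp only [hx, if_true])
      (fun x hx => by rw [hdegeq x, hcap]; simp only [hBA x hx, hx, if_false, if_true])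
      (fun z hz => by
        rw [hdegeq z, hcap]
        have := Finset.disjoint_right.mp hdisjAS hz
        have := Finset.disjoint_right.mp hdisjBS hz
        simp only [‹z ∉ A›, ‹z ∉ B›, if_false])
  · refine structure_of_caps n G S B A hdisjBS hdisjAS hdisjAB.symm ?_ h1
      hcapB hcapA
      (fun x hx => by rw [hdegeq x, hcap]; simp only [hBA x hx, hx, if_false, if_true])
      (fun x hx => by rw [hdegeq x, hcap]; simp only [hx, if_true])
      (fun z hz => by
        rw [hdegeq z, hcap]
        have := Finset.disjoint_right.mp hdisjAS hz
        have := Finset.disjoint_right.mp hdisjBS hz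
        simp only [‹z ∉ A›, ‹z ∉ B›, if_false])
    rw [← hunion]; ext x; simp only [Finset.mem_union]; tauto

lemma iso_of_structure (n k : ℕ) (hn : 3 ≤ n) (hk1 : 1 ≤ k) (hk2 : k ≤ n-1)
    (G : SimpleGraph (Fin n)) [DecidableRel G.Adj]
    (S : Finset (Fin n)) (hSk : S.card = k) (v0 : Fin n) (hv0S : v0 ∉ S)
    (h1 : G.neighborFinset v0 = S)
    (h2 : ∀ z ∈ S, G.neighborFinset z = univ.erase z)
    (h3 : ∀ y, y ∉ S → y ≠ v0 → G.neighborFinset y = (univ.erase v0).erase y) :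
    Nonempty (G ≃g KnK n k) := by
  classical
  -- adjacency characterization for G
  have hGadj : ∀ x y : Fin n, G.Adj x y ↔ x ≠ y ∧ (x = v0 → y ∈ S) ∧ (y = v0 → x ∈ S) := by
    have key : ∀ x y : Fin n, x ≠ v0 → (G.Adj x y ↔ (x ≠ y ∧ (y = v0 → x ∈ S))) := by
      intro x y hxv0
      by_cases hxS : x ∈ S
      · rw [← SimpleGraph.mem_neighborFinset, h2 x hxS, Finset.mem_erase]
        simp only [Finset.mem_univ, and_true]
        constructor
        · intro h; exact ⟨h.symm, fun _ => hxS⟩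
        · intro h; exact h.1.symm
      · rw [← SimpleGraph.mem_neighborFinset, h3 x hxS hxv0, Finset.mem_erase, Finset.mem_erase]
        simp only [Finset.mem_univ, and_true]
        constructor
        · intro h; exact ⟨h.1.symm, fun hy => absurd hy h.2⟩
        · rintro ⟨hxy, hy⟩
          refine ⟨hxy.symm, fun hyv => ?_⟩
          exact absurd hxS (by simpa using hy hyv)
    intro x y
    by_cases hxv0 : x = v0
    · subst hxv0
      rw [← SimpleGraph.mem_neighborFinset, h1]
      constructor
      · intro h
        exact ⟨fun he => hv0S (he ▸ h), fun _ => h, fun hy => absurd h (hy ▸ hv0S)⟩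
      · rintro ⟨hne, hS', -⟩
        exact hS' rfl
    · rw [key x y hxv0]
      constructor
      · intro h
        exact ⟨h.1, fun hx => absurd hx hxv0, h.2⟩
      · rintro ⟨hne, -, h⟩
        exact ⟨hne, h⟩
  -- the bijection
  set B : Finset (Fin n) := (univ.erase v0) \ S with hB
  have hSsub : S ⊆ univ.erase v0 := by
    intro x hx
    rw [Finset.mem_erase]
    exact ⟨fun h => hv0S (h ▸ hx), Finset.mem_univ _⟩
  have hBcard : B.card = n - 1 - k := by
    rw [hB, Finset.card_sdiff_of_subset hSsub, Finset.card_erase_of_mem (Finset.mem_univ _),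
      Finset.card_univ, Fintype.card_fin, hSk]
  have memB : ∀ x : Fin n, x ≠ v0 → x ∉ S → x ∈ B := by
    intro x hxv hxS
    rw [hB, Finset.mem_sdiff, Finset.mem_erase]
    exact ⟨⟨hxv, Finset.mem_univ _⟩, hxS⟩
  have eS : (S : Finset (Fin n)) ≃ Fin k := S.equivFinOfCardEq hSk
  have eB : (B : Finset (Fin n)) ≃ Fin (n-1-k) := B.equivFinOfCardEq hBcard
  set f : Fin n → Fin n := fun x =>
    if x = v0 then ⟨0, by omega⟩
    else if hx : x ∈ S then ⟨(eS ⟨x, hx⟩).val + 1, by have := (eS ⟨x, hx⟩).isLt; omega⟩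
    else if hxv : x = v0 then ⟨0, by omega⟩
    else ⟨(eB ⟨x, memB x hxv hx⟩).val + k + 1, by have := (eB ⟨x, memB x hxv hx⟩).isLt; omega⟩
    with hf
  have hfv0 : ∀ x : Fin n, x = v0 → (f x).val = 0 := by
    intro x hx; rw [hf]; simp [hx]
  have hfSval : ∀ (x : Fin n) (hx : x ∈ S), (f x).val = (eS ⟨x, hx⟩).val + 1 := by
    intro x hx
    have hxv : ¬ x = v0 := fun h => hv0S (h ▸ hx)
    rw [hf]
    simp only [if_neg hxv, dif_pos hx]
  have hfBval : ∀ (x : Fin n) (hxv : ¬ x = v0) (hxS : ¬ x ∈ S),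
      (f x).val = (eB ⟨x, memB x hxv hxS⟩).val + k + 1 := by
    intro x hxv hxS
    rw [hf]
    simp only [if_neg hxv, dif_neg hxS, dif_neg hxv]
  have hfS : ∀ x : Fin n, x ∈ S → 1 ≤ (f x).val ∧ (f x).val ≤ k := by
    intro x hx
    rw [hfSval x hx]
    have := (eS ⟨x, hx⟩).isLt
    omega
  have hfB : ∀ x : Fin n, x ≠ v0 → x ∉ S → k < (f x).val := by
    intro x hxv hxS
    rw [hfBval x hxv hxS]
    omega
  have c0 : ∀ x : Fin n, (f x).val = 0 ↔ x = v0 := by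
    intro x
    constructor
    · intro h
      by_contra hxv
      by_cases hxS : x ∈ S
      · have := hfS x hxS; omega
      · have := hfB x hxv hxS; omega
    · exact hfv0 x
  have cS : ∀ x : Fin n, x ≠ v0 → ((f x).val ≤ k ↔ x ∈ S) := by
    intro x hxv
    constructor
    · intro h
      by_contra hxS
      have := hfB x hxv hxS; omega
    · intro h; exact (hfS x h).2
  have hinj : Function.Injective f := by
    intro x y hxy
    by_cases hxv : x = v0 <;> by_cases hyv : y = v0
    · rw [hxv, hyv]
    · exfalso
      have e1 : (f x).val = 0 := hfv0 x hxv
      have e2 : (f y).val ≠ 0 := fun h => hyv ((c0 y).mp h)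
      rw [hxy] at e1; exact e2 e1
    · exfalso
      have e1 : (f y).val = 0 := hfv0 y hyv
      have e2 : (f x).val ≠ 0 := fun h => hxv ((c0 x).mp h)
      rw [hxy] at e2; exact e2 e1
    · by_cases hxS : x ∈ S <;> by_cases hyS : y ∈ S
      · have ex := hfSval x hxS
        have ey := hfSval y hyS
        have : (eS ⟨x, hxS⟩) = (eS ⟨y, hyS⟩) := by
          apply Fin.ext
          have := congrArg Fin.val hxy
          omega
        exact congrArg Subtype.val (eS.injective this)
      · exfalso
        have := (hfS x hxS).2
        have := hfB y hyv hyS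
        rw [hxy] at *; omega
      · exfalso
        have := (hfS y hyS).2
        have := hfB x hxv hxS
        rw [hxy] at *; omega
      · have ex := hfBval x hxv hxS
        have ey := hfBval y hyv hyS
        have : (eB ⟨x, memB x hxv hxS⟩) = (eB ⟨y, memB y hyv hyS⟩) := by
          apply Fin.ext
          have := congrArg Fin.val hxy
          omega
        exact congrArg Subtype.val (eB.injective this)
  have hbij : Function.Bijective f := Finite.injective_iff_bijective.mp hinj
  refine ⟨⟨Equiv.ofBijective f hbij, ?_⟩⟩
  intro a b
  show (KnK n k).Adj (f a) (f b) ↔ G.Adj a b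
  rw [knk_adj, hGadj]
  have hne : (f a).val ≠ (f b).val ↔ a ≠ b := by
    constructor
    · intro h he; exact h (he ▸ rfl)
    · intro h he; exact h (hinj (Fin.ext he))
  rw [hne]
  apply and_congr_right
  intro hab
  apply and_congr
  · constructor
    · intro h ha
      have hbv : b ≠ v0 := fun hb => hab (ha.trans hb.symm)
      exact (cS b hbv).mp (h ((c0 a).mpr ha))
    · intro h hfa
      have ha := (c0 a).mp hfa
      exact (hfS b (h ha)).2
  · constructor
    · intro h hb
      have hav : a ≠ v0 := fun ha => hab (ha.trans hb.symm)
      exact (cS a hav).mp (h ((c0 b).mpr hb))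
    · intro h hfb
      have hb := (c0 b).mp hfb
      exact (hfS a (h hb)).2


lemma knk_mZ1 (n k : ℕ) (hn : 3 ≤ n) (hk1 : 1 ≤ k) (hk2 : k ≤ n - 1) :
    mZ1 (KnK n k) = (k * (n-1)^k * (n-2)^(n-1-k))^2 := by
  rw [mZ1_eq_sq, knk_prod_degree n k hn hk1 hk2]

lemma iso_top (n k : ℕ) (hn : 3 ≤ n) (hk : k = n - 1) :
    Nonempty ((⊤ : SimpleGraph (Fin n)) ≃g KnK n k) := by
  refine ⟨⟨Equiv.refl _, ?_⟩⟩
  intro a b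
  show (KnK n k).Adj a b ↔ (⊤ : SimpleGraph (Fin n)).Adj a b
  rw [knk_adj, SimpleGraph.top_adj]
  have ha := a.isLt
  have hb := b.isLt
  constructor
  · intro h he
    exact h.1 (he ▸ rfl)
  · intro h
    refine ⟨fun he => h (Fin.ext he), fun _ => by omega, fun _ => by omega⟩

theorem stmt0 (n k : ℕ) (hn : 3 ≤ n) (hk1 : 1 ≤ k) (hk2 : k ≤ n - 1)
    (G : SimpleGraph (Fin n)) (hG : G.Connected) (hκ : VertexConnAtMost G k) :
    mZ1 G ≤ k ^ 2 * (n - 1) ^ (2 * k) * (n - 2) ^ (2 * (n - k - 1)) ∧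
      (mZ1 G = k ^ 2 * (n - 1) ^ (2 * k) * (n - 2) ^ (2 * (n - k - 1)) ↔
        Nonempty (G ≃g KnK n k)) := by
  classical
  haveI : DecidableRel G.Adj := Classical.decRel _
  have hRHS : k ^ 2 * (n - 1) ^ (2 * k) * (n - 2) ^ (2 * (n - k - 1))
      = (k * (n-1)^k * (n-2)^(n-1-k))^2 := by
    rw [show 2*k = k*2 by ring, show 2*(n-k-1) = (n-1-k)*2 by omega,
      pow_mul, pow_mul, mul_pow, mul_pow]
  have hKnK : mZ1 (KnK n k) = (k * (n-1)^k * (n-2)^(n-1-k))^2 := knk_mZ1 n k hn hk1 hk2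
  rcases hκ with ⟨S, hScard, hcut⟩ | ⟨htop, hcard⟩
  · obtain ⟨hle, hstruct⟩ := cut_bound n k hn hk1 hk2 G hG S hScard hcut
    have hmz : mZ1 G = (∏ v : Fin n, G.degree v)^2 := mZ1_eq_sq G
    constructor
    · rw [hmz, hRHS]
      exact Nat.pow_le_pow_left hle 2
    · constructor
      · intro heq
        rw [hmz, hRHS] at heq
        have hprod : (∏ v : Fin n, G.degree v) = k * (n-1)^k * (n-2)^(n-1-k) :=
          Nat.pow_left_injective (by norm_num) heq
        obtain ⟨hSk, v0, hv0S, hn1, hn2, hn3⟩ := hstruct hprod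
        exact iso_of_structure n k hn hk1 hk2 G S hSk v0 hv0S hn1 hn2 hn3
      · rintro ⟨e⟩
        rw [hRHS, ← hKnK]
        exact mZ1_iso G (KnK n k) e
  · have hk' : k = n - 1 := by
      rw [Fintype.card_fin] at hcard
      omega
    subst htop
    obtain ⟨e⟩ := iso_top n k hn hk'
    have hmz : mZ1 (⊤ : SimpleGraph (Fin n)) = k ^ 2 * (n - 1) ^ (2 * k) * (n - 2) ^ (2 * (n - k - 1)) := by
      rw [hRHS, ← hKnK]
      exact mZ1_iso _ _ e
    exact ⟨le_of_eq hmz, ⟨fun _ => ⟨e⟩, fun _ => hmz⟩⟩
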